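/- Let n ≥ 2, let ε₀ > 0 be a real number, and let λ₁ ≥ λ₂ ≥ … ≥ λₙ be real numbers with ∑_{i=1}^n arctan(λᵢ) ≥ (n−2)·π/2 + ε₀ and with λₙ < 0. Then ∑_{i=1}^n 1/λᵢ ≤ −tan(ε₀/2). (Note that the hypotheses force λᵢ > 0 for all i < n, so all the reciprocals are defined.) -/
import Mathlib


open Real Finset

private lemma ne_odd_mul_pi_div_two {x : ℝ} (hx : -(π/2) < x) (hx' : x < π/2) :
    ∀ k : ℤ, x ≠ (2 * k + 1) * π / 2 := by
  intro k h
  rcases le_or_gt 0 k with hk | hk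
  · have h1 : (1 : ℝ) ≤ 2 * (k : ℝ) + 1 := by
      have : (0:ℝ) ≤ (k:ℝ) := by exact_mod_cast hk
      linarith
    have : π / 2 ≤ (2 * (k:ℝ) + 1) * π / 2 := by
      nlinarith [pi_pos]
    rw [h] at hx'; linarith
  · have hk1 : (k : ℝ) ≤ -1 := by exact_mod_cast (by omega : k ≤ -1)
    have h1 : (2 * (k : ℝ) + 1) ≤ -1 := by linarith
    have : (2 * (k:ℝ) + 1) * π / 2 ≤ -(π / 2) := by
      nlinarith [pi_pos]
    rw [h] at hx; linarith

private lemma tan_superadd {a b : ℝ} (ha : 0 ≤ a) (hb : 0 ≤ b) (hab : a + b < π/2) :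
    Real.tan a + Real.tan b ≤ Real.tan (a + b) := by
  have ha2 : a < π / 2 := by linarith
  have hb2 : b < π / 2 := by linarith
  have hpi : 0 < π / 2 := by positivity
  rcases ha.eq_or_lt with rfl | ha0
  · simp
  rcases hb.eq_or_lt with rfl | hb0
  · simp
  have hta : 0 < Real.tan a := Real.tan_pos_of_pos_of_lt_pi_div_two ha0 ha2
  have htb : 0 < Real.tan b := Real.tan_pos_of_pos_of_lt_pi_div_two hb0 hb2
  -- tan a * tan b < 1
  have hmem1 : b ∈ Set.Ioo (-(π/2)) (π/2) := ⟨by linarith, hb2⟩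
  have hmem2 : π/2 - a ∈ Set.Ioo (-(π/2)) (π/2) := ⟨by linarith, by linarith⟩
  have hlt : Real.tan b < Real.tan (π/2 - a) :=
    Real.strictMonoOn_tan hmem1 hmem2 (by linarith)
  rw [Real.tan_pi_div_two_sub] at hlt
  have hprod : Real.tan a * Real.tan b < 1 := by
    have := (mul_lt_mul_iff_right₀ hta).mpr hlt
    rwa [mul_inv_cancel₀ hta.ne'] at this
  have hD : 0 < 1 - Real.tan a * Real.tan b := by linarith
  have hD1 : 1 - Real.tan a * Real.tan b ≤ 1 := by nlinarith
  have heq : Real.tan (a + b) = (Real.tan a + Real.tan b) / (1 - Real.tan a * Real.tan b) :=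
    Real.tan_add' ⟨ne_odd_mul_pi_div_two (by linarith) ha2,
      ne_odd_mul_pi_div_two (by linarith) hb2⟩
  rw [heq, le_div_iff₀ hD]
  nlinarith

private lemma tan_sum_le {ι : Type*} (s : Finset ι) (f : ι → ℝ)
    (h0 : ∀ i ∈ s, 0 ≤ f i) (hs : ∑ i ∈ s, f i < π/2) :
    ∑ i ∈ s, Real.tan (f i) ≤ Real.tan (∑ i ∈ s, f i) := by
  induction s using Finset.cons_induction with
  | empty => simp
  | cons a s ha ih =>
    rw [Finset.sum_cons, Finset.sum_cons]
    rw [Finset.sum_cons] at hs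
    have hfa : 0 ≤ f a := h0 a (Finset.mem_cons_self _ _)
    have h0' : ∀ i ∈ s, 0 ≤ f i := fun i hi => h0 i (Finset.mem_cons_of_mem hi)
    have hrest : 0 ≤ ∑ i ∈ s, f i := Finset.sum_nonneg h0'
    have hs' : ∑ i ∈ s, f i < π/2 := by linarith
    have h1 := ih h0' hs'
    have h2 := tan_superadd hfa hrest hs
    linarith

/-- The reciprocal-sum estimate: if `λ₁ ≥ … ≥ λₙ` satisfy
`∑ arctan λᵢ ≥ (n-2)π/2 + ε₀` with `ε₀ > 0` and `λₙ < 0`, then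
`∑ 1/λᵢ ≤ -tan(ε₀/2)`. -/
theorem dHYM_reciprocal_sum_estimate
    (n : ℕ) (hn : 2 ≤ n) (ε₀ : ℝ) (hε : 0 < ε₀)
    (lam : Fin n → ℝ) (hlam : Antitone lam)
    (hsum : ((n : ℝ) - 2) * π / 2 + ε₀ ≤ ∑ i, Real.arctan (lam i))
    (hneg : lam ⟨n - 1, by omega⟩ < 0) :
    ∑ i, 1 / lam i ≤ -Real.tan (ε₀ / 2) := by
  set L : Fin n := ⟨n - 1, by omega⟩ with hL
  set μ : Fin n → ℝ := fun i => π / 2 - Real.arctan (lam i) with hμ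
  have hμpos : ∀ i, 0 < μ i := fun i => by
    simp only [hμ, sub_pos]; exact Real.arctan_lt_pi_div_two _
  -- total sum of μ
  have hμsum : ∑ i, μ i ≤ π - ε₀ := by
    have h1 : ∑ i, μ i = (n : ℝ) * (π / 2) - ∑ i, Real.arctan (lam i) := by
      simp [hμ, Finset.sum_sub_distrib, Finset.card_fin, nsmul_eq_mul]
    have h2 : ((n : ℝ) - 2) * π / 2 = (n : ℝ) * (π / 2) - π := by ring
    linarith
  -- μ L > π/2
  have hμL : π / 2 < μ L := by
    have : Real.arctan (lam L) < Real.arctan 0 := Real.arctan_strictMono hneg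
    rw [Real.arctan_zero] at this
    simp only [hμ]; linarith
  -- split off L
  have hsplit : ∑ i ∈ Finset.univ.erase L, μ i + μ L = ∑ i, μ i :=
    Finset.sum_erase_add _ _ (Finset.mem_univ L)
  set S : ℝ := ∑ i ∈ Finset.univ.erase L, μ i with hS
  rw [← hsplit] at hμsum
  clear_value S μ L
  have hS0 : 0 ≤ S := by
    rw [hS]; exact Finset.sum_nonneg fun i _ => (hμpos i).le
  have hSlt : S < π / 2 - ε₀ := by linarith
  -- reciprocals are tangents
  have hrec : ∀ i, 1 / lam i = Real.tan (μ i) := fun i => by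
    simp only [hμ]
    rw [Real.tan_pi_div_two_sub, Real.tan_arctan, one_div]
  -- sum over erase L
  have hstep1 : ∑ i ∈ Finset.univ.erase L, Real.tan (μ i) ≤ Real.tan S := by
    rw [hS]
    exact tan_sum_le _ _ (fun i _ => (hμpos i).le) (by rw [← hS]; linarith)
  -- the last term
  have hstep2 : Real.tan (μ L) ≤ -Real.tan (ε₀ + S) := by
    have hper : Real.tan (μ L) = Real.tan (μ L - π) := (Real.tan_periodic.sub_eq _).symm
    have hmem1 : μ L - π ∈ Set.Ioo (-(π/2)) (π/2) := by
      constructor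
      · linarith
      · have : μ L ≤ π - ε₀ - S := by linarith
        linarith
    have hmem2 : -(ε₀ + S) ∈ Set.Ioo (-(π/2)) (π/2) := by
      constructor
      · linarith
      · linarith
    have hle : μ L - π ≤ -(ε₀ + S) := by linarith
    have := Real.strictMonoOn_tan.monotoneOn hmem1 hmem2 hle
    rw [Real.tan_neg] at this
    linarith [hper ▸ this]
  have hstep3 : Real.tan ε₀ + Real.tan S ≤ Real.tan (ε₀ + S) :=
    tan_superadd hε.le hS0 (by linarith)
  have hstep4 : Real.tan (ε₀ / 2) ≤ Real.tan ε₀ := by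
    have h2 : Real.tan (ε₀/2) + Real.tan (ε₀/2) ≤ Real.tan (ε₀/2 + ε₀/2) :=
      tan_superadd (by linarith) (by linarith) (by linarith)
    have h3 : 0 ≤ Real.tan (ε₀/2) :=
      Real.tan_nonneg_of_nonneg_of_le_pi_div_two (by linarith) (by linarith)
    have : ε₀ / 2 + ε₀ / 2 = ε₀ := by ring
    rw [this] at h2
    linarith
  calc ∑ i, 1 / lam i = ∑ i ∈ Finset.univ.erase L, Real.tan (μ i) + Real.tan (μ L) := by
        simp_rw [hrec]
        exact (Finset.sum_erase_add _ _ (Finset.mem_univ L)).symm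
    _ ≤ Real.tan S + (-Real.tan (ε₀ + S)) := add_le_add hstep1 hstep2
    _ ≤ -Real.tan (ε₀ / 2) := by linarith
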